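/- Let A be a commutative ring, let n ≥ 1 and r ≥ 1 be integers, and let I be an ideal of A with I^r = (0). Then the kernel of the natural group homomorphism GL_n(A) → GL_n(A/I) (i.e., the group of invertible n×n matrices g over A such that every entry of g − 1 lies in I) is a nilpotent group of nilpotency class at most r − 1. -/

import Mathlib

section Aux

variable {A : Type*} [CommRing A] {n : ℕ}

private lemma entries_mul_left {J : Ideal A} {M : Matrix (Fin n) (Fin n) A}
    (N : Matrix (Fin n) (Fin n) A) (hM : ∀ i j, M i j ∈ J) :
    ∀ i j, (M * N) i j ∈ J := by
  intro i j
  rw [Matrix.mul_apply]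
  exact Submodule.sum_mem _ fun k _ => J.mul_mem_right _ (hM i k)

private lemma entries_mul_right {J : Ideal A} (M : Matrix (Fin n) (Fin n) A)
    {N : Matrix (Fin n) (Fin n) A} (hN : ∀ i j, N i j ∈ J) :
    ∀ i j, (M * N) i j ∈ J := by
  intro i j
  rw [Matrix.mul_apply]
  exact Submodule.sum_mem _ fun k _ => J.mul_mem_left _ (hN k j)

private lemma entries_mul_mul {J J' : Ideal A} {M N : Matrix (Fin n) (Fin n) A}
    (hM : ∀ i j, M i j ∈ J) (hN : ∀ i j, N i j ∈ J') :
    ∀ i j, (M * N) i j ∈ J * J' := by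
  intro i j
  rw [Matrix.mul_apply]
  exact Submodule.sum_mem _ fun k _ => Ideal.mul_mem_mul (hM i k) (hN k j)

/-- The filtration subgroup of a subgroup `K` of `GL_n(A)`: elements `g` with
entries of `g - 1` in `I ^ m`. -/
private def filtSubgroup (I : Ideal A) (m : ℕ) (K : Subgroup (Matrix (Fin n) (Fin n) A)ˣ) :
    Subgroup K where
  carrier := {g | ∀ i j, (((g : (Matrix (Fin n) (Fin n) A)ˣ) : Matrix (Fin n) (Fin n) A) - 1) i j
    ∈ I ^ m}
  one_mem' := by intro i j; simp
  mul_mem' := by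
    intro a b ha hb i j
    set x : Matrix (Fin n) (Fin n) A := ((a : (Matrix (Fin n) (Fin n) A)ˣ) : Matrix (Fin n) (Fin n) A)
    set y : Matrix (Fin n) (Fin n) A := ((b : (Matrix (Fin n) (Fin n) A)ˣ) : Matrix (Fin n) (Fin n) A)
    have hxy : (((a * b : K) : (Matrix (Fin n) (Fin n) A)ˣ) : Matrix (Fin n) (Fin n) A) - 1
        = (x - 1) * (y - 1) + (x - 1) + (y - 1) := by
      push_cast
      noncomm_ring
    rw [hxy]
    exact add_mem (add_mem ((entries_mul_left _ ha) i j) (ha i j)) (hb i j)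
  inv_mem' := by
    intro a ha i j
    set x : Matrix (Fin n) (Fin n) A := ((a : (Matrix (Fin n) (Fin n) A)ˣ) : Matrix (Fin n) (Fin n) A)
    set xi : Matrix (Fin n) (Fin n) A := ((((a : (Matrix (Fin n) (Fin n) A)ˣ)⁻¹ : (Matrix (Fin n) (Fin n) A)ˣ)) : Matrix (Fin n) (Fin n) A)
    have hinv : (((a⁻¹ : K) : (Matrix (Fin n) (Fin n) A)ˣ) : Matrix (Fin n) (Fin n) A) - 1
        = xi * (1 - x) := by
      have hcoe : ((((a : (Matrix (Fin n) (Fin n) A)ˣ)⁻¹ : (Matrix (Fin n) (Fin n) A)ˣ)) : Matrix (Fin n) (Fin n) A) = xi := rfl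
      have h1 : xi * x = 1 := (a : (Matrix (Fin n) (Fin n) A)ˣ).inv_mul
      push_cast
      rw [← Matrix.coe_units_inv, hcoe, mul_sub, h1, mul_one]
    rw [hinv]
    refine entries_mul_right _ (fun i j => ?_) i j
    have : (1 - x) i j = -((x - 1) i j) := by simp [Matrix.sub_apply]
    rw [this]
    exact neg_mem (ha i j)

end Aux

open scoped commutatorElement

/-- Let `A` be a commutative ring, `n ≥ 1`, `r ≥ 1`, and `I` an ideal with
`I^r = 0`. Then the kernel of the natural map `GL_n(A) → GL_n(A/I)` is a nilpotent group of
nilpotency class at most `r − 1`, i.e. its `(r-1)`-st lower central series term is trivial. -/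
theorem stmt_11 (A : Type*) [CommRing A] (n r : ℕ) (hn : 1 ≤ n) (hr : 1 ≤ r)
    (I : Ideal A) (hI : I ^ r = ⊥) :
    lowerCentralSeries
      (MonoidHom.ker
        (Units.map
          ((RingHom.mapMatrix (Ideal.Quotient.mk I) :
              Matrix (Fin n) (Fin n) A →+* Matrix (Fin n) (Fin n) (A ⧸ I)).toMonoidHom)))
      (r - 1) = ⊥ := by
  set f := (Units.map
          ((RingHom.mapMatrix (Ideal.Quotient.mk I) :
              Matrix (Fin n) (Fin n) A →+* Matrix (Fin n) (Fin n) (A ⧸ I)).toMonoidHom)) with hf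
  set K := MonoidHom.ker f with hK
  -- Every element of K lies in the first filtration step.
  have base : ∀ g : K, g ∈ filtSubgroup I 1 K := by
    intro g i j
    have hg : f (g : (Matrix (Fin n) (Fin n) A)ˣ) = 1 := g.2
    have hmat : (RingHom.mapMatrix (Ideal.Quotient.mk I))
        (((g : (Matrix (Fin n) (Fin n) A)ˣ) : Matrix (Fin n) (Fin n) A)) = 1 := by
      have := congrArg Units.val hg
      simpa [hf] using this
    have hentry := congrFun (congrFun hmat i) j
    rw [pow_one]
    rw [← Ideal.Quotient.eq_zero_iff_mem]
    have : Ideal.Quotient.mk I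
        ((((g : (Matrix (Fin n) (Fin n) A)ˣ) : Matrix (Fin n) (Fin n) A)) i j)
        = (1 : Matrix (Fin n) (Fin n) (A ⧸ I)) i j := by
      simpa [RingHom.mapMatrix_apply, Matrix.map_apply] using hentry
    simp only [Matrix.sub_apply, map_sub]
    rw [this]
    by_cases h : i = j <;> simp [Matrix.one_apply, h]
  have key : ∀ k, Subgroup.lowerCentralSeries (⊤ : Subgroup K) k ≤ filtSubgroup I (k + 1) K := by
    intro k
    induction k with
    | zero => intro g _; exact base g
    | succ k ih =>
      rw [Subgroup.lowerCentralSeries_succ]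
      refine Subgroup.commutator_le.mpr ?_
      intro g₁ hg₁ g₂ _
      have h₁ : ∀ i j, (((g₁ : (Matrix (Fin n) (Fin n) A)ˣ) : Matrix (Fin n) (Fin n) A) - 1) i j
          ∈ I ^ (k + 1) := ih hg₁
      have h₂ : ∀ i j, (((g₂ : (Matrix (Fin n) (Fin n) A)ˣ) : Matrix (Fin n) (Fin n) A) - 1) i j ∈ I ^ 1 := base g₂
      set x : Matrix (Fin n) (Fin n) A := ((g₁ : (Matrix (Fin n) (Fin n) A)ˣ) : Matrix (Fin n) (Fin n) A)
      set y : Matrix (Fin n) (Fin n) A := ((g₂ : (Matrix (Fin n) (Fin n) A)ˣ) : Matrix (Fin n) (Fin n) A)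
      set xi : Matrix (Fin n) (Fin n) A := ((((g₁ : (Matrix (Fin n) (Fin n) A)ˣ)⁻¹ : (Matrix (Fin n) (Fin n) A)ˣ)) : Matrix (Fin n) (Fin n) A)
      set yi : Matrix (Fin n) (Fin n) A := ((((g₂ : (Matrix (Fin n) (Fin n) A)ˣ)⁻¹ : (Matrix (Fin n) (Fin n) A)ˣ)) : Matrix (Fin n) (Fin n) A)
      intro i j
      have hxxi : x * xi = 1 := (g₁ : (Matrix (Fin n) (Fin n) A)ˣ).mul_inv
      have hyyi : y * yi = 1 := (g₂ : (Matrix (Fin n) (Fin n) A)ˣ).mul_inv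
      have hc : (((⁅g₁, g₂⁆ : K) : (Matrix (Fin n) (Fin n) A)ˣ) : Matrix (Fin n) (Fin n) A) - 1
          = ((x - 1) * (y - 1) - (y - 1) * (x - 1)) * (xi * yi) := by
        have : (((⁅g₁, g₂⁆ : K) : (Matrix (Fin n) (Fin n) A)ˣ) : Matrix (Fin n) (Fin n) A)
            = x * y * xi * yi := by
          rw [commutatorElement_def]
          push_cast
          rw [← Matrix.coe_units_inv, ← Matrix.coe_units_inv]
        rw [this]
        have expand : ((x - 1) * (y - 1) - (y - 1) * (x - 1)) = x * y - y * x := by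
          noncomm_ring
        rw [expand]
        rw [sub_mul]
        have h2 : y * x * (xi * yi) = 1 := by
          calc y * x * (xi * yi) = y * (x * xi) * yi := by noncomm_ring
          _ = 1 := by rw [hxxi, mul_one, hyyi]
        rw [h2]
        noncomm_ring
      rw [hc]
      refine entries_mul_left _ (fun i j => ?_) i j
      have hm1 : ((x - 1) * (y - 1)) i j ∈ I ^ (k + 1 + 1) := by
        have := entries_mul_mul (J := I ^ (k+1)) (J' := I ^ 1) h₁ h₂ i j
        rwa [← pow_add] at this
      have hm2 : ((y - 1) * (x - 1)) i j ∈ I ^ (k + 1 + 1) := by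
        have := entries_mul_mul (J := I ^ 1) (J' := I ^ (k+1)) h₂ h₁ i j
        rwa [← pow_add, add_comm 1 (k+1)] at this
      exact sub_mem hm1 hm2
  have final := key (r - 1)
  rw [Nat.sub_add_cancel hr] at final
  show Subgroup.lowerCentralSeries K (r - 1) = ⊥
  rw [← Subgroup.top_subtype_lowerCentralSeries, Subgroup.map_eq_bot_iff_of_injective _ K.subtype_injective]
  rw [eq_bot_iff]
  intro g hg
  have hent := final hg
  rw [Subgroup.mem_bot]
  have hmat : (((g : (Matrix (Fin n) (Fin n) A)ˣ) : Matrix (Fin n) (Fin n) A)) - 1 = 0 := by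
    ext i j
    have h := hent i j
    rw [hI, Ideal.mem_bot] at h
    simpa using h
  exact Subtype.ext (Units.ext (sub_eq_zero.mp hmat))
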